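/- arXiv:hep-th/0304136 — 3 statements merged into one kernel-verified Lean document; each statement's English description precedes it below -/
import Mathlib

section
/- For all i, j, k ∈ {1,2,3} the operators satisfy the sl(1|3) triple relations: [{A_i⁺, A_j⁻}, A_k⁺] = δ_{jk} A_i⁺ − δ_{ij} A_k⁺ and [{A_i⁺, A_j⁻}, A_k⁻] = −δ_{ik} A_j⁻ + δ_{ij} A_k⁻ (as linear operators on V). -/
open scoped BigOperators
open Finset

/-- Index set: triples Θ = (θ₁,θ₂,θ₃) with θᵢ ∈ {0,1}. -/
abbrev WIdx := Fin 3 → Fin 2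

/-- The 8-dimensional state space V = EuclideanSpace ℂ ({0,1}³). -/
abbrev WV := EuclideanSpace ℂ WIdx

/-- Orthonormal basis vector e_Θ. -/
noncomputable def eV (Θ : WIdx) : WV := EuclideanSpace.single Θ 1

/-- The basis (e_Θ)_Θ of V, as a `Basis`. -/
noncomputable def bV : Module.Basis WIdx ℂ WV := (EuclideanSpace.basisFun WIdx ℂ).toBasis

/-- q(Θ) = θ₁ + θ₂ + θ₃. -/
def qv (Θ : WIdx) : ℕ := ∑ j, (Θ j : ℕ)

/-- Sign factor (−1)^(θ₁ + ⋯ + θ_{i−1}). -/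
def sgnBelow (i : Fin 3) (Θ : WIdx) : ℂ :=
  (-1 : ℂ) ^ (∑ j : Fin 3, if (j : ℕ) < (i : ℕ) then (Θ j : ℕ) else 0)

/-- Sign factor (−1)^(θ₁ + ⋯ + θ_i). -/
def sgnUpTo (i : Fin 3) (Θ : WIdx) : ℂ :=
  (-1 : ℂ) ^ (∑ j : Fin 3, if (j : ℕ) ≤ (i : ℕ) then (Θ j : ℕ) else 0)

/-- A_i⁻ e_Θ = θ_i (−1)^(θ₁+⋯+θ_{i−1}) √(p−q(Θ)+1) e_{Θ[θ_i↦0]}. -/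
noncomputable def Aminus (p : ℕ) (i : Fin 3) : WV →ₗ[ℂ] WV :=
  bV.constr ℂ fun Θ =>
    (((Θ i : ℕ) : ℂ) * sgnBelow i Θ *
      ((Real.sqrt ((p : ℝ) - (qv Θ : ℝ) + 1) : ℝ) : ℂ)) • eV (Function.update Θ i 0)

/-- A_i⁺ e_Θ = (1−θ_i) (−1)^(θ₁+⋯+θ_{i−1}) √(p−q(Θ)) e_{Θ[θ_i↦1]}. -/
noncomputable def Aplus (p : ℕ) (i : Fin 3) : WV →ₗ[ℂ] WV :=
  bV.constr ℂ fun Θ =>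
    (((1 : ℂ) - ((Θ i : ℕ) : ℂ)) * sgnBelow i Θ *
      ((Real.sqrt ((p : ℝ) - (qv Θ : ℝ)) : ℝ) : ℂ)) • eV (Function.update Θ i 1)

/-- Anticommutator {X,Y} = XY + YX. -/
noncomputable def acommOp (X Y : WV →ₗ[ℂ] WV) : WV →ₗ[ℂ] WV := X ∘ₗ Y + Y ∘ₗ X

/-- Commutator [X,Y] = XY − YX. -/
noncomputable def commOp (X Y : WV →ₗ[ℂ] WV) : WV →ₗ[ℂ] WV := X ∘ₗ Y - Y ∘ₗ X

/-- Dimensionless Hamiltonian ĥ = Σᵢ {A_i⁺, A_i⁻}. -/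
noncomputable def hOp (p : ℕ) : WV →ₗ[ℂ] WV := ∑ i, acommOp (Aplus p i) (Aminus p i)

/-- Position operator r̂_k(t) = e^{−it} A_k⁺ + e^{it} A_k⁻. -/
noncomputable def rOp (p : ℕ) (k : Fin 3) (t : ℝ) : WV →ₗ[ℂ] WV :=
  Complex.exp (-(t : ℂ) * Complex.I) • Aplus p k +
    Complex.exp ((t : ℂ) * Complex.I) • Aminus p k

/-- Momentum operator p̂_k(t) = −i (e^{−it} A_k⁺ − e^{it} A_k⁻). -/
noncomputable def pOp (p : ℕ) (k : Fin 3) (t : ℝ) : WV →ₗ[ℂ] WV :=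
  (-Complex.I) • (Complex.exp (-(t : ℂ) * Complex.I) • Aplus p k -
    Complex.exp ((t : ℂ) * Complex.I) • Aminus p k)

/-- Levi-Civita symbol ε_{jkl} with ε_{123} = 1 (indices 0,1,2 here). -/
def eps (j k l : Fin 3) : ℂ :=
  if (j, k, l) = (0, 1, 2) ∨ (j, k, l) = (1, 2, 0) ∨ (j, k, l) = (2, 0, 1) then 1
  else if (j, k, l) = (2, 1, 0) ∨ (j, k, l) = (1, 0, 2) ∨ (j, k, l) = (0, 2, 1) then -1
  else 0

/-- Angular momentum M_j = −i Σ_{k,l} ε_{jkl} {A_k⁺, A_l⁻}. -/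
noncomputable def Mop (p : ℕ) (j : Fin 3) : WV →ₗ[ℂ] WV :=
  (-Complex.I) • ∑ k, ∑ l, eps j k l • acommOp (Aplus p k) (Aminus p l)

/-- Eigenvectors v_k(Θ,t) of the position operator r̂_k(t). -/
noncomputable def vVec (k : Fin 3) (t : ℝ) (Θ : WIdx) : WV :=
  (((Real.sqrt 2)⁻¹ : ℝ) : ℂ) •
    (eV (Function.update Θ k 0) +
      (sgnUpTo k Θ * Complex.exp (-(t : ℂ) * Complex.I)) • eV (Function.update Θ k 1))

/-- Eigenvectors ṽ_k(Θ,t) of the momentum operator p̂_k(t). -/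
noncomputable def vTilde (k : Fin 3) (t : ℝ) (Θ : WIdx) : WV :=
  (((Real.sqrt 2)⁻¹ : ℝ) : ℂ) •
    (eV (Function.update Θ k 0) -
      (Complex.I * sgnUpTo k Θ * Complex.exp (-(t : ℂ) * Complex.I)) • eV (Function.update Θ k 1))

/-- The non-stationary state z = (1/√2)(e_{(0,0,0)} + e_{(0,0,1)}). -/
noncomputable def zState : WV :=
  (((Real.sqrt 2)⁻¹ : ℝ) : ℂ) • (eV ![0, 0, 0] + eV ![0, 0, 1])

/-- The state x₁ = (1/√2)(e_{(0,1,0)} + e_{(1,1,0)}). -/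
noncomputable def x1State : WV :=
  (((Real.sqrt 2)⁻¹ : ℝ) : ℂ) • (eV ![0, 1, 0] + eV ![1, 1, 0])

local notation "⟪" x ", " y "⟫" => @inner ℂ _ _ x y

section AuxSl13

lemma Aplus_eV (p : ℕ) (i : Fin 3) (Θ : WIdx) :
    Aplus p i (eV Θ) =
      (((1 : ℂ) - ((Θ i : ℕ) : ℂ)) * sgnBelow i Θ *
        ((Real.sqrt ((p : ℝ) - (qv Θ : ℝ)) : ℝ) : ℂ)) • eV (Function.update Θ i 1) := by
  have h : eV Θ = bV Θ := by
    simp [eV, bV, EuclideanSpace.basisFun_apply]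
  rw [h, Aplus, Module.Basis.constr_basis]

lemma Aminus_eV (p : ℕ) (i : Fin 3) (Θ : WIdx) :
    Aminus p i (eV Θ) =
      (((Θ i : ℕ) : ℂ) * sgnBelow i Θ *
        ((Real.sqrt ((p : ℝ) - (qv Θ : ℝ) + 1) : ℝ) : ℂ)) • eV (Function.update Θ i 0) := by
  have h : eV Θ = bV Θ := by
    simp [eV, bV, EuclideanSpace.basisFun_apply]
  rw [h, Aminus, Module.Basis.constr_basis]

lemma upd0 (a b c : Fin 2) (x : Fin 2) : Function.update ![a,b,c] 0 x = ![x,b,c] := by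
  funext m; fin_cases m <;> simp [Function.update]
lemma upd1 (a b c : Fin 2) (x : Fin 2) : Function.update ![a,b,c] 1 x = ![a,x,c] := by
  funext m; fin_cases m <;> simp [Function.update]
lemma upd2 (a b c : Fin 2) (x : Fin 2) : Function.update ![a,b,c] 2 x = ![a,b,x] := by
  funext m; fin_cases m <;> simp [Function.update]

lemma ext8 {f g : WV →ₗ[ℂ] WV}
    (h : ∀ a b c : Fin 2, f (eV ![a,b,c]) = g (eV ![a,b,c])) : f = g := by
  apply bV.ext; intro Θ
  have hb : bV Θ = eV Θ := by simp [eV, bV, EuclideanSpace.basisFun_apply]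
  have hΘ : Θ = ![Θ 0, Θ 1, Θ 2] := by funext m; fin_cases m <;> rfl
  rw [hb, hΘ]; exact h _ _ _

lemma rcube (x : ℝ) (hx : 0 ≤ x) :
    Real.sqrt x ^ 3 = x * Real.sqrt x := by
  rw [pow_succ, Real.sq_sqrt hx]

set_option maxHeartbeats 12000000 in
lemma relA (p : ℕ) (hp : 3 ≤ p) (i j k : Fin 3) :
    commOp (acommOp (Aplus p i) (Aminus p j)) (Aplus p k) =
      (if j = k then (1 : ℂ) else 0) • Aplus p i -
        (if i = j then (1 : ℂ) else 0) • Aplus p k := by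
  have hp3 : (3:ℝ) ≤ p := by exact_mod_cast hp
  have h0 : (0:ℝ) ≤ (p:ℝ) := by linarith
  have h1 : (0:ℝ) ≤ -1 + (p:ℝ) := by linarith
  have h2 : (0:ℝ) ≤ -2 + (p:ℝ) := by linarith
  have h3 : (0:ℝ) ≤ -3 + (p:ℝ) := by linarith
  have h4 : (0:ℝ) ≤ 1 + (p:ℝ) := by linarith
  fin_cases i <;> fin_cases j <;> fin_cases k <;>
  · refine ext8 fun a b c => ?_
    fin_cases a <;> fin_cases b <;> fin_cases c <;>
      simp [commOp, acommOp, Aplus_eV, Aminus_eV, upd0, upd1, upd2, qv, sgnBelow,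
        Fin.sum_univ_three, smul_smul] <;>
      match_scalars <;> ring_nf <;>
      (try simp only [Real.sq_sqrt h0, Real.sq_sqrt h1, Real.sq_sqrt h2, Real.sq_sqrt h3,
        Real.sq_sqrt h4, rcube _ h0, rcube _ h1, rcube _ h2, rcube _ h3, rcube _ h4]) <;>
      ring

set_option maxHeartbeats 12000000 in
lemma relB (p : ℕ) (hp : 3 ≤ p) (i j k : Fin 3) :
    commOp (acommOp (Aplus p i) (Aminus p j)) (Aminus p k) =
      -((if i = k then (1 : ℂ) else 0) • Aminus p j) +
        (if i = j then (1 : ℂ) else 0) • Aminus p k := by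
  have hp3 : (3:ℝ) ≤ p := by exact_mod_cast hp
  have h0 : (0:ℝ) ≤ (p:ℝ) := by linarith
  have h1 : (0:ℝ) ≤ -1 + (p:ℝ) := by linarith
  have h2 : (0:ℝ) ≤ -2 + (p:ℝ) := by linarith
  have h3 : (0:ℝ) ≤ -3 + (p:ℝ) := by linarith
  have h4 : (0:ℝ) ≤ 1 + (p:ℝ) := by linarith
  fin_cases i <;> fin_cases j <;> fin_cases k <;>
  · refine ext8 fun a b c => ?_
    fin_cases a <;> fin_cases b <;> fin_cases c <;>
      simp [commOp, acommOp, Aplus_eV, Aminus_eV, upd0, upd1, upd2, qv, sgnBelow,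
        Fin.sum_univ_three, smul_smul] <;>
      match_scalars <;> ring_nf <;>
      (try simp only [Real.sq_sqrt h0, Real.sq_sqrt h1, Real.sq_sqrt h2, Real.sq_sqrt h3,
        Real.sq_sqrt h4, rcube _ h0, rcube _ h1, rcube _ h2, rcube _ h3, rcube _ h4]) <;>
      ring

end AuxSl13

/-- the sl(1|3) triple relations
[{A_i⁺, A_j⁻}, A_k⁺] = δ_{jk} A_i⁺ − δ_{ij} A_k⁺ and
[{A_i⁺, A_j⁻}, A_k⁻] = −δ_{ik} A_j⁻ + δ_{ij} A_k⁻. -/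
theorem stmt0 (p : ℕ) (hp : 3 ≤ p) (i j k : Fin 3) :
    commOp (acommOp (Aplus p i) (Aminus p j)) (Aplus p k) =
      (if j = k then (1 : ℂ) else 0) • Aplus p i -
        (if i = j then (1 : ℂ) else 0) • Aplus p k ∧
    commOp (acommOp (Aplus p i) (Aminus p j)) (Aminus p k) =
      -((if i = k then (1 : ℂ) else 0) • Aminus p j) +
        (if i = j then (1 : ℂ) else 0) • Aminus p k := by
  exact ⟨relA p hp i j k, relB p hp i j k⟩
end

section
/- Every basis vector e_Θ is an eigenvector of the dimensionless Hamiltonian ĥ: ĥ e_Θ = (3p − 2q(Θ)) e_Θ. Hence ĥ has exactly the four eigenvalues 3p, 3p−2, 3p−4, 3p−6, each energy level being equally spaced. -/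
open scoped BigOperators
open Finset

local notation "⟪" x ", " y "⟫" => @inner ℂ _ _ x y

section Helpers

lemma bV_eq (Θ : WIdx) : bV Θ = eV Θ := by
  simp [bV, eV, EuclideanSpace.basisFun_apply]

lemma eV_ne_zero (Θ : WIdx) : eV Θ ≠ 0 := by
  intro h
  have h1 : (eV Θ) Θ = 1 := by simp [eV]
  rw [h] at h1
  simp at h1

lemma qv_le (Θ : WIdx) : qv Θ ≤ 3 := by
  have h : ∀ j : Fin 3, (Θ j : ℕ) ≤ 1 := fun j => Nat.lt_succ_iff.mp (Θ j).is_lt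
  calc qv Θ ≤ ∑ _j : Fin 3, 1 := Finset.sum_le_sum fun j _ => h j
  _ = 3 := by simp

lemma qv_update (i : Fin 3) (Θ : WIdx) (c : Fin 2) :
    qv (Function.update Θ i c) + (Θ i : ℕ) = qv Θ + (c : ℕ) := by
  unfold qv
  have h : ∀ j : Fin 3, ((Function.update Θ i c j : Fin 2) : ℕ)
      = Function.update (fun j => ((Θ j : ℕ))) i (c : ℕ) j := by
    intro j
    by_cases hj : j = i
    · subst hj; simp
    · simp [Function.update_of_ne hj]
  rw [Finset.sum_congr rfl fun j _ => h j]
  rw [Finset.sum_update_of_mem (Finset.mem_univ i)]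
  rw [← Finset.sum_erase_add _ _ (Finset.mem_univ i)]
  simp [Finset.sdiff_singleton_eq_erase]
  ring

lemma sgnBelow_update (i : Fin 3) (Θ : WIdx) (c : Fin 2) :
    sgnBelow i (Function.update Θ i c) = sgnBelow i Θ := by
  unfold sgnBelow
  congr 1
  apply Finset.sum_congr rfl
  intro j _
  by_cases h : (j : ℕ) < (i : ℕ)
  · have hj : j ≠ i := by
      intro he; rw [he] at h; exact lt_irrefl _ h
    simp [h, Function.update_of_ne hj]
  · simp [h]

lemma sgnBelow_sq (i : Fin 3) (Θ : WIdx) : sgnBelow i Θ * sgnBelow i Θ = 1 := by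
  unfold sgnBelow
  rw [← pow_add]
  exact Even.neg_one_pow ⟨_, rfl⟩

lemma acomm_diag (p : ℕ) (hp : 3 ≤ p) (i : Fin 3) (Θ : WIdx) :
    acommOp (Aplus p i) (Aminus p i) (eV Θ) =
      ((p : ℂ) - (qv Θ : ℂ) + ((Θ i : ℕ) : ℂ)) • eV Θ := by
  have hq3 := qv_le Θ
  have hAm : ∀ Θ' : WIdx, Aminus p i (eV Θ') =
      (((Θ' i : ℕ) : ℂ) * sgnBelow i Θ' *
        ((Real.sqrt ((p : ℝ) - (qv Θ' : ℝ) + 1) : ℝ) : ℂ)) • eV (Function.update Θ' i 0) := by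
    intro Θ'; rw [← bV_eq Θ', Aminus, Module.Basis.constr_basis]
  have hAp : ∀ Θ' : WIdx, Aplus p i (eV Θ') =
      (((1 : ℂ) - ((Θ' i : ℕ) : ℂ)) * sgnBelow i Θ' *
        ((Real.sqrt ((p : ℝ) - (qv Θ' : ℝ)) : ℝ) : ℂ)) • eV (Function.update Θ' i 1) := by
    intro Θ'; rw [← bV_eq Θ', Aplus, Module.Basis.constr_basis]
  have hcase : (Θ i : ℕ) = 0 ∨ (Θ i : ℕ) = 1 := by omega
  simp only [acommOp, LinearMap.add_apply, LinearMap.comp_apply]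
  rw [hAm Θ, hAp Θ, map_smul, map_smul, hAm (Function.update Θ i 1),
    hAp (Function.update Θ i 0)]
  rcases hcase with h | h
  · -- θ_i = 0
    have hΘi : Θ i = 0 := Fin.ext h
    have hq1 : qv (Function.update Θ i 1) = qv Θ + 1 := by
      have h2 := qv_update i Θ 1
      simp [hΘi] at h2; omega
    have hΘ1i : Function.update Θ i 1 i = 1 := by simp
    have hback : Function.update (Function.update Θ i 1) i 0 = Θ := by
      rw [Function.update_idem, ← hΘi, Function.update_eq_self]
    have hs : sgnBelow i (Function.update Θ i 1) = sgnBelow i Θ := sgnBelow_update i Θ 1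
    have hsq : ((Real.sqrt ((p : ℝ) - (qv Θ : ℝ)) : ℝ) : ℂ) *
        ((Real.sqrt ((p : ℝ) - (qv Θ : ℝ)) : ℝ) : ℂ) = (p : ℂ) - (qv Θ : ℂ) := by
      have hq : (qv Θ : ℝ) ≤ (p : ℝ) := by exact_mod_cast hq3.trans hp
      rw [← Complex.ofReal_mul, Real.mul_self_sqrt (by linarith)]
      push_cast; ring
    rw [hΘ1i, hq1, hs, hback]
    simp only [hΘi, Fin.val_zero, Nat.cast_zero, zero_mul, zero_smul, smul_zero, zero_add,
      Fin.val_one, Nat.cast_one, map_zero]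
    rw [smul_smul]
    have harg : (p : ℝ) - ((qv Θ + 1 : ℕ) : ℝ) + 1 = (p : ℝ) - (qv Θ : ℝ) := by
      push_cast; ring
    rw [harg]
    congr 1
    linear_combination (sgnBelow i Θ * sgnBelow i Θ) * hsq +
      ((p : ℂ) - (qv Θ : ℂ)) * sgnBelow_sq i Θ
  · -- θ_i = 1
    have hΘi : Θ i = 1 := Fin.ext h
    have hq0 : qv (Function.update Θ i 0) + 1 = qv Θ := by
      have h2 := qv_update i Θ 0
      simp [hΘi] at h2; omega
    have hΘ0i : Function.update Θ i 0 i = 0 := by simp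
    have hback : Function.update (Function.update Θ i 0) i 1 = Θ := by
      rw [Function.update_idem, ← hΘi, Function.update_eq_self]
    have hs : sgnBelow i (Function.update Θ i 0) = sgnBelow i Θ := sgnBelow_update i Θ 0
    have hsq : ((Real.sqrt ((p : ℝ) - (qv Θ : ℝ) + 1) : ℝ) : ℂ) *
        ((Real.sqrt ((p : ℝ) - (qv Θ : ℝ) + 1) : ℝ) : ℂ) = (p : ℂ) - (qv Θ : ℂ) + 1 := by
      have hq : (qv Θ : ℝ) ≤ (p : ℝ) := by exact_mod_cast hq3.trans hp
      rw [← Complex.ofReal_mul, Real.mul_self_sqrt (by linarith)]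
      push_cast; ring
    rw [hΘ0i, hs, hback]
    simp only [hΘi, Fin.val_one, Nat.cast_one, Fin.val_zero, Nat.cast_zero, sub_self,
      zero_mul, zero_smul, smul_zero, add_zero, one_mul, map_zero]
    rw [smul_smul]
    have harg : (p : ℝ) - ((qv (Function.update Θ i 0) : ℕ) : ℝ) = (p : ℝ) - (qv Θ : ℝ) + 1 := by
      have : ((qv (Function.update Θ i 0) : ℕ) : ℝ) + 1 = (qv Θ : ℝ) := by exact_mod_cast hq0
      linarith
    rw [harg]
    congr 1
    linear_combination (sgnBelow i Θ * sgnBelow i Θ) * hsq +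
      ((p : ℂ) - (qv Θ : ℂ) + 1) * sgnBelow_sq i Θ

end Helpers

lemma hOp_eV (p : ℕ) (hp : 3 ≤ p) (Θ : WIdx) :
    hOp p (eV Θ) = (3 * (p : ℂ) - 2 * (qv Θ : ℂ)) • eV Θ := by
  unfold hOp
  rw [LinearMap.sum_apply, Finset.sum_congr rfl fun i _ => acomm_diag p hp i Θ,
    ← Finset.sum_smul]
  congr 1
  have hsum : ∑ i : Fin 3, ((Θ i : ℕ) : ℂ) = (qv Θ : ℂ) := by
    unfold qv; push_cast; rfl
  rw [Finset.sum_add_distrib, Finset.sum_const, hsum]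
  simp
  ring

lemma hOp_coord (p : ℕ) (hp : 3 ≤ p) (x : WV) (Θ : WIdx) :
    hOp p x Θ = (3 * (p : ℂ) - 2 * (qv Θ : ℂ)) * x Θ := by
  conv_lhs => rw [← (EuclideanSpace.basisFun WIdx ℂ).sum_repr x]
  rw [map_sum]
  have hrw : ∀ Θ' : WIdx,
      hOp p ((EuclideanSpace.basisFun WIdx ℂ).repr x Θ' • (EuclideanSpace.basisFun WIdx ℂ) Θ')
      = (x Θ' * (3 * (p : ℂ) - 2 * (qv Θ' : ℂ))) • eV Θ' := by
    intro Θ'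
    rw [map_smul, EuclideanSpace.basisFun_apply,
      show EuclideanSpace.single Θ' (1 : ℂ) = eV Θ' from rfl, hOp_eV p hp, smul_smul]
    rfl
  rw [Finset.sum_congr rfl fun Θ' _ => hrw Θ']
  rw [WithLp.ofLp_sum, Finset.sum_apply]
  simp only [PiLp.smul_apply, eV, EuclideanSpace.single_apply, smul_eq_mul]
  rw [Finset.sum_eq_single Θ]
  · simp [mul_comm]
  · intro b _ hb; simp [Ne.symm hb]
  · intro hb; exact absurd (Finset.mem_univ Θ) hb


/-- ĥ e_Θ = (3p − 2q(Θ)) e_Θ, and ĥ has exactly the four eigenvalues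
3p, 3p−2, 3p−4, 3p−6. -/
theorem stmt4 (p : ℕ) (hp : 3 ≤ p) :
    (∀ Θ : WIdx, hOp p (eV Θ) = (3 * (p : ℂ) - 2 * (qv Θ : ℂ)) • eV Θ) ∧
    (∀ μ : ℂ, (∃ x : WV, x ≠ 0 ∧ hOp p x = μ • x) ↔
      μ ∈ ({3 * (p : ℂ), 3 * (p : ℂ) - 2, 3 * (p : ℂ) - 4, 3 * (p : ℂ) - 6} : Set ℂ)) := by
  refine ⟨fun Θ => hOp_eV p hp Θ, fun μ => ⟨?_, ?_⟩⟩
  · rintro ⟨x, hx0, hx⟩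
    obtain ⟨Θ, hΘ⟩ : ∃ Θ, x Θ ≠ 0 := by
      by_contra hc
      push_neg at hc
      exact hx0 (by ext Θ; exact hc Θ)
    have h1 : (3 * (p : ℂ) - 2 * (qv Θ : ℂ)) * x Θ = μ * x Θ := by
      rw [← hOp_coord p hp x Θ, hx]; rfl
    have h2 : μ = 3 * (p : ℂ) - 2 * (qv Θ : ℂ) := (mul_right_cancel₀ hΘ h1).symm
    have hq := qv_le Θ
    simp only [Set.mem_insert_iff, Set.mem_singleton_iff]
    interval_cases h : (qv Θ) <;> simp_all <;> ring_nf <;> tauto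
  · intro hμ
    simp only [Set.mem_insert_iff, Set.mem_singleton_iff] at hμ
    rcases hμ with h | h | h | h
    · refine ⟨eV ![0, 0, 0], eV_ne_zero _, ?_⟩
      rw [hOp_eV p hp, h]
      norm_num [show qv ![0,0,0] = 0 from by decide]
    · refine ⟨eV ![1, 0, 0], eV_ne_zero _, ?_⟩
      rw [hOp_eV p hp, h]
      norm_num [show qv ![1,0,0] = 1 from by decide]
    · refine ⟨eV ![1, 1, 0], eV_ne_zero _, ?_⟩
      rw [hOp_eV p hp, h]
      norm_num [show qv ![1,1,0] = 2 from by decide]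
    · refine ⟨eV ![1, 1, 1], eV_ne_zero _, ?_⟩
      rw [hOp_eV p hp, h]
      norm_num [show qv ![1,1,1] = 3 from by decide]
end

section
/- Oscillation of probabilities: for the non-stationary state z = (1/√2)(e_{(0,0,0)} + e_{(0,0,1)}) and for all t ∈ ℝ, the probability of measuring the third coordinate value +√p is |⟨v_3((0,0,0), t), z⟩|² = (1 + cos t)/2, and the probability of measuring −√p is |⟨v_3((0,0,1), t), z⟩|² = (1 − cos t)/2; these two probabilities sum to 1 and are time-dependent. -/
open scoped BigOperators
open Finset

local notation "⟪" x ", " y "⟫" => @inner ℂ _ _ x y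

lemma inner_eV (Θ Θ' : WIdx) : ⟪eV Θ, eV Θ'⟫ = if Θ' = Θ then 1 else 0 := by
  simp [eV, EuclideanSpace.inner_single_left, EuclideanSpace.single_apply]
  exact if_congr eq_comm rfl rfl

lemma sgnUpTo_000 : sgnUpTo 2 ![0, 0, 0] = 1 := by
  have h : (∑ j : Fin 3, if (j : ℕ) ≤ ((2 : Fin 3) : ℕ) then ((![0,0,0] : WIdx) j : ℕ) else 0) = 0 := by decide
  rw [sgnUpTo, h, pow_zero]

lemma sgnUpTo_001 : sgnUpTo 2 ![0, 0, 1] = -1 := by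
  have h : (∑ j : Fin 3, if (j : ℕ) ≤ ((2 : Fin 3) : ℕ) then ((![0,0,1] : WIdx) j : ℕ) else 0) = 1 := by decide
  rw [sgnUpTo, h, pow_one]

lemma upd000_0 : Function.update (![0,0,0] : WIdx) 2 0 = ![0,0,0] := by decide
lemma upd000_1 : Function.update (![0,0,0] : WIdx) 2 1 = ![0,0,1] := by decide
lemma upd001_0 : Function.update (![0,0,1] : WIdx) 2 0 = ![0,0,0] := by decide
lemma upd001_1 : Function.update (![0,0,1] : WIdx) 2 1 = ![0,0,1] := by decide

lemma ne_000_001 : (![0,0,0] : WIdx) ≠ ![0,0,1] := by decide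

lemma inner_v0 (t : ℝ) :
    ⟪vVec 2 t ![0, 0, 0], zState⟫ = (1 + Complex.exp ((t : ℂ) * Complex.I)) / 2 := by
  rw [vVec, zState, upd000_0, upd000_1, sgnUpTo_000]
  rw [inner_smul_left, inner_smul_right, inner_add_left, inner_add_right, inner_add_right,
    inner_smul_left, inner_smul_left, inner_eV, inner_eV, inner_eV, inner_eV]
  rw [if_pos rfl, if_pos rfl, if_neg ne_000_001, if_neg (Ne.symm ne_000_001)]
  have hc : (starRingEnd ℂ) (Complex.exp (-(t : ℂ) * Complex.I)) =
      Complex.exp ((t : ℂ) * Complex.I) := by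
    rw [← Complex.exp_conj]
    congr 1
    simp [Complex.conj_ofReal]
  simp only [map_one, one_mul, mul_one, mul_zero, add_zero, zero_add, hc, map_mul,
    Complex.conj_ofReal]
  ring_nf
  rw [show ((((Real.sqrt 2)⁻¹ : ℝ)) : ℂ) ^ 2 = (1:ℂ)/2 by
    rw [← Complex.ofReal_pow]
    norm_num [inv_pow, Real.sq_sqrt (by norm_num : (0:ℝ) ≤ 2)]]
  ring

lemma inner_v1 (t : ℝ) :
    ⟪vVec 2 t ![0, 0, 1], zState⟫ = (1 - Complex.exp ((t : ℂ) * Complex.I)) / 2 := by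
  rw [vVec, zState, upd001_0, upd001_1, sgnUpTo_001]
  rw [inner_smul_left, inner_smul_right, inner_add_left, inner_add_right, inner_add_right,
    inner_smul_left, inner_smul_left, inner_eV, inner_eV, inner_eV, inner_eV]
  rw [if_pos rfl, if_pos rfl, if_neg ne_000_001, if_neg (Ne.symm ne_000_001)]
  have hc : (starRingEnd ℂ) (Complex.exp (-(t : ℂ) * Complex.I)) =
      Complex.exp ((t : ℂ) * Complex.I) := by
    rw [← Complex.exp_conj]
    congr 1
    simp [Complex.conj_ofReal]
  simp only [map_one, one_mul, mul_one, mul_zero, add_zero, zero_add, hc, map_mul,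
    Complex.conj_ofReal, map_neg, map_one]
  ring_nf
  rw [show ((((Real.sqrt 2)⁻¹ : ℝ)) : ℂ) ^ 2 = (1:ℂ)/2 by
    rw [← Complex.ofReal_pow]
    norm_num [inv_pow, Real.sq_sqrt (by norm_num : (0:ℝ) ≤ 2)]]
  ring

lemma norm_v0 (t : ℝ) :
    ‖(⟪vVec 2 t ![0, 0, 0], zState⟫ : ℂ)‖ ^ 2 = (1 + Real.cos t) / 2 := by
  rw [inner_v0]
  rw [Complex.exp_mul_I]
  have hre : ((1 + (Complex.cos t + Complex.sin t * Complex.I)) / 2).re = (1 + Real.cos t) / 2 := by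
    simp [Complex.div_re, Complex.add_re, Complex.cos_ofReal_re, Complex.mul_re,
      Complex.sin_ofReal_re, Complex.normSq]
  have him : ((1 + (Complex.cos t + Complex.sin t * Complex.I)) / 2).im = Real.sin t / 2 := by
    simp [Complex.div_im, Complex.add_im, Complex.cos_ofReal_im, Complex.mul_im,
      Complex.sin_ofReal_im, Complex.sin_ofReal_re, Complex.normSq]
  rw [Complex.sq_norm, Complex.normSq_apply, hre, him]
  nlinarith [Real.sin_sq_add_cos_sq t]

lemma norm_v1 (t : ℝ) :
    ‖(⟪vVec 2 t ![0, 0, 1], zState⟫ : ℂ)‖ ^ 2 = (1 - Real.cos t) / 2 := by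
  rw [inner_v1]
  rw [Complex.exp_mul_I]
  have hre : ((1 - (Complex.cos t + Complex.sin t * Complex.I)) / 2).re = (1 - Real.cos t) / 2 := by
    simp [Complex.div_re, Complex.sub_re, Complex.cos_ofReal_re, Complex.mul_re,
      Complex.sin_ofReal_re, Complex.normSq]
  have him : ((1 - (Complex.cos t + Complex.sin t * Complex.I)) / 2).im = -(Real.sin t / 2) := by
    simp [Complex.div_im, Complex.sub_im, Complex.cos_ofReal_im, Complex.mul_im,
      Complex.sin_ofReal_im, Complex.sin_ofReal_re, Complex.normSq]
    ring
  rw [Complex.sq_norm, Complex.normSq_apply, hre, him]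
  nlinarith [Real.sin_sq_add_cos_sq t]

/-- oscillation of probabilities for the state z:
|⟨v₃((0,0,0),t), z⟩|² = (1 + cos t)/2, |⟨v₃((0,0,1),t), z⟩|² = (1 − cos t)/2;
they sum to 1 and are time-dependent. -/
theorem stmt18 (p : ℕ) (hp : 3 ≤ p) (t : ℝ) :
    ‖(⟪vVec 2 t ![0, 0, 0], zState⟫ : ℂ)‖ ^ 2 = (1 + Real.cos t) / 2 ∧
    ‖(⟪vVec 2 t ![0, 0, 1], zState⟫ : ℂ)‖ ^ 2 = (1 - Real.cos t) / 2 ∧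
    ‖(⟪vVec 2 t ![0, 0, 0], zState⟫ : ℂ)‖ ^ 2 +
      ‖(⟪vVec 2 t ![0, 0, 1], zState⟫ : ℂ)‖ ^ 2 = 1 ∧
    (∃ t₁ t₂ : ℝ,
      ‖(⟪vVec 2 t₁ ![0, 0, 0], zState⟫ : ℂ)‖ ^ 2 ≠
        ‖(⟪vVec 2 t₂ ![0, 0, 0], zState⟫ : ℂ)‖ ^ 2) := by
  refine ⟨norm_v0 t, norm_v1 t, ?_, 0, Real.pi, ?_⟩
  · rw [norm_v0, norm_v1]; ring
  · rw [norm_v0, norm_v0, Real.cos_zero, Real.cos_pi]; norm_num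
end
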